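/- For every killing rate κ > 0 and every x ∈ ℤ² with |x| ≥ 1, the Green's function satisfies G^{o,o} − G^{o,x} ≥ 3/4. -/

import Mathlib

open scoped Real

/-- Graph (L¹) distance of `x ∈ ℤ²` from the origin: `|x₁| + |x₂|`. -/
def gnorm (x : ℤ × ℤ) : ℕ := x.1.natAbs + x.2.natAbs

/-- `W n x` is the number of nearest-neighbour walks of length `n` in `ℤ²`
from the origin `o = (0,0)` to `x`, i.e. the number of sequences
`(v₀, …, v_n)` with `v₀ = o`, `v_n = x` and `|v_{i+1} − v_i| = 1` for all `i`. -/
noncomputable def W (n : ℕ) (x : ℤ × ℤ) : ℕ :=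
  Set.ncard {v : Fin (n + 1) → ℤ × ℤ |
    v 0 = (0, 0) ∧ v (Fin.last n) = x ∧
    ∀ i : Fin n, gnorm (v i.succ - v i.castSucc) = 1}

/-- The Green's function `G^{o,x}` of the simple random walk on `ℤ²` with
killing rate `κ`: `G κ x = Σ_{n≥0} (4+κ)^{-n} W_n^{o,x}`. -/
noncomputable def G (κ : ℝ) (x : ℤ × ℤ) : ℝ :=
  ∑' n : ℕ, (1 / (4 + κ)) ^ n * (W n x : ℝ)

namespace SRW


def w : ℕ → ℤ × ℤ → ℕ
  | 0, x => if x = 0 then 1 else 0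
  | n+1, x => w n (x - (1,0)) + w n (x - (-1,0)) + w n (x - (0,1)) + w n (x - (0,-1))

lemma w_zero (x : ℤ × ℤ) : w 0 x = if x = 0 then 1 else 0 := rfl

lemma w_succ (n : ℕ) (x : ℤ × ℤ) :
    w (n+1) x = w n (x - (1,0)) + w n (x - (-1,0)) + w n (x - (0,1)) + w n (x - (0,-1)) := rfl

lemma w_le (n : ℕ) (x : ℤ × ℤ) : w n x ≤ 4 ^ n := by
  induction n generalizing x with
  | zero => simp [w_zero]; split <;> omega
  | succ n ih =>
    rw [w_succ, pow_succ]
    have := ih (x - (1,0)); have := ih (x - (-1,0))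
    have := ih (x - (0,1)); have := ih (x - (0,-1))
    omega

lemma w_supp (n : ℕ) (x : ℤ × ℤ) (h : (n : ℤ) < |x.1| + |x.2|) : w n x = 0 := by
  induction n generalizing x with
  | zero =>
    rw [w_zero, if_neg]
    rintro rfl; simp at h
  | succ n ih =>
    rw [w_succ]
    have h1 : w n (x - (1,0)) = 0 := by
      apply ih; have := abs_sub_abs_le_abs_sub x.1 (1 : ℤ); simp at *; omega
    have h2 : w n (x - (-1,0)) = 0 := by
      apply ih; have := abs_sub_abs_le_abs_sub x.1 (-1 : ℤ); simp at *; omega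
    have h3 : w n (x - (0,1)) = 0 := by
      apply ih; have := abs_sub_abs_le_abs_sub x.2 (1 : ℤ); simp at *; omega
    have h4 : w n (x - (0,-1)) = 0 := by
      apply ih; have := abs_sub_abs_le_abs_sub x.2 (-1 : ℤ); simp at *; omega
    omega

lemma w_neg (n : ℕ) (x : ℤ × ℤ) : w n (-x) = w n x := by
  induction n generalizing x with
  | zero => simp [w_zero, neg_eq_zero]
  | succ n ih =>
    rw [w_succ, w_succ]
    have e1 : -x - (1,0) = -(x + (1,0)) := by cases x; simp [Prod.ext_iff]; try omega
    have e2 : -x - (-1,0) = -(x + (-1,0)) := by cases x; simp [Prod.ext_iff]; try omega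
    have e3 : -x - (0,1) = -(x + (0,1)) := by cases x; simp [Prod.ext_iff]; try omega
    have e4 : -x - (0,-1) = -(x + (0,-1)) := by cases x; simp [Prod.ext_iff]; try omega
    rw [e1, e2, e3, e4, ih, ih, ih, ih]
    have f1 : x + (1,0) = x - (-1,0) := by cases x; simp [Prod.ext_iff]; try omega
    have f2 : x + (-1,0) = x - (1,0) := by cases x; simp [Prod.ext_iff]; try omega
    have f3 : x + (0,1) = x - (0,-1) := by cases x; simp [Prod.ext_iff]; try omega
    have f4 : x + (0,-1) = x - (0,1) := by cases x; simp [Prod.ext_iff]; try omega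
    rw [f1, f2, f3, f4]; ring

noncomputable def box (M : ℤ) : Finset (ℤ × ℤ) := Finset.Icc (-M, -M) (M, M)

lemma mem_box {M : ℤ} {y : ℤ × ℤ} : y ∈ box M ↔ |y.1| ≤ M ∧ |y.2| ≤ M := by
  simp [box, Finset.mem_Icc, Prod.le_def, abs_le, and_comm, and_assoc, and_left_comm]

lemma box_subset {k M : ℤ} (h : k ≤ M) : box k ⊆ box M := by
  intro y hy; rw [mem_box] at *; omega

lemma w_not_mem_box {n : ℕ} {y : ℤ × ℤ} (h : y ∉ box (n : ℤ)) : w n y = 0 := by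
  apply w_supp
  rw [mem_box] at h
  have := abs_nonneg y.1; have := abs_nonneg y.2
  omega

lemma sum_box_of_supp (F : ℤ × ℤ → ℝ) {k M : ℤ} (hkM : k ≤ M)
    (hsupp : ∀ u, u ∉ box k → F u = 0) :
    ∑ y ∈ box M, F y = ∑ y ∈ box k, F y :=
  (Finset.sum_subset (box_subset hkM) (fun u _ hu => hsupp u hu)).symm

lemma sum_sub_reindex (F : ℤ × ℤ → ℝ) (a : ℤ × ℤ) {k M : ℤ} (hk : 0 ≤ k)
    (h1 : k + |a.1| ≤ M) (h2 : k + |a.2| ≤ M)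
    (hsupp : ∀ u, u ∉ box k → F u = 0) :
    ∑ y ∈ box M, F (a - y) = ∑ u ∈ box k, F u := by
  have hinj : Function.Injective (fun y : ℤ × ℤ => a - y) := fun u v h => by
    simpa using sub_right_injective h
  have hmap := Finset.sum_map (box M) ⟨fun y => a - y, hinj⟩ F
  simp only [Function.Embedding.coeFn_mk] at hmap
  rw [← hmap]
  apply (Finset.sum_subset _ (fun u _ hu => hsupp u hu)).symm
  intro u hu
  rw [Finset.mem_map]
  refine ⟨a - u, ?_, by simp⟩
  rw [mem_box] at hu ⊢
  constructor
  · have := abs_sub a.1 u.1; have h' := abs_nonneg u.1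
    simp only [Prod.fst_sub]
    calc |a.1 - u.1| ≤ |a.1| + |u.1| := abs_sub a.1 u.1
      _ ≤ M := by omega
  · simp only [Prod.snd_sub]
    calc |a.2 - u.2| ≤ |a.2| + |u.2| := abs_sub a.2 u.2
      _ ≤ M := by omega

lemma chapman (m n : ℕ) (x : ℤ × ℤ) :
    w (m + n) x = ∑ y ∈ box (m : ℤ), w m y * w n (x - y) := by
  induction n generalizing x with
  | zero =>
    simp only [Nat.add_zero, w_zero]
    trans (∑ y ∈ box (m : ℤ), if y = x then w m y else 0)
    · rw [Finset.sum_ite_eq' (box (m:ℤ)) x (fun y => w m y)]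
      split
      · rfl
      · next h => exact w_not_mem_box h
    · exact Finset.sum_congr rfl (fun y _ => by
        by_cases h : y = x
        · simp [h]
        · simp [h, sub_eq_zero, if_neg (Ne.symm h), if_neg h]) |>.symm
  | succ n ih =>
    have : m + (n + 1) = (m + n) + 1 := by omega
    rw [this, w_succ, ih, ih, ih, ih, ← Finset.sum_add_distrib, ← Finset.sum_add_distrib,
      ← Finset.sum_add_distrib]
    apply Finset.sum_congr rfl
    intro y _
    rw [w_succ]
    have g1 : x - (1,0) - y = x - y - (1,0) := by cases x; cases y; simp [Prod.ext_iff]; try omega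
    have g2 : x - (-1,0) - y = x - y - (-1,0) := by cases x; cases y; simp [Prod.ext_iff]; try omega
    have g3 : x - (0,1) - y = x - y - (0,1) := by cases x; cases y; simp [Prod.ext_iff]; try omega
    have g4 : x - (0,-1) - y = x - y - (0,-1) := by cases x; cases y; simp [Prod.ext_iff]; try omega
    rw [g1, g2, g3, g4]
    ring

lemma chapman_box (n : ℕ) (z : ℤ × ℤ) {M : ℤ} (hM : (n : ℤ) ≤ M) :
    ∑ y ∈ box M, (w n y : ℝ) * (w n (z - y) : ℝ) = (w (2 * n) z : ℝ) := by
  rw [sum_box_of_supp _ hM (fun u hu => by show (w n u : ℝ) * _ = 0; rw [w_not_mem_box hu]; simp)]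
  rw [two_mul, chapman n n z]
  push_cast
  rfl

lemma sum_prod (n : ℕ) (a b : ℤ × ℤ) {M : ℤ}
    (h1 : (n : ℤ) + |a.1| ≤ M) (h2 : (n : ℤ) + |a.2| ≤ M) :
    ∑ y ∈ box M, (w n (a - y) : ℝ) * (w n (b - y) : ℝ) = (w (2 * n) (a - b) : ℝ) := by
  have hM : (n : ℤ) ≤ M := by have := abs_nonneg a.1; omega
  have key : ∑ y ∈ box M, (fun u => (w n u : ℝ) * (w n ((b - a) + u) : ℝ)) (a - y)
      = ∑ u ∈ box (n : ℤ), (w n u : ℝ) * (w n ((b - a) + u) : ℝ) := by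
    exact sum_sub_reindex (fun u => (w n u : ℝ) * (w n ((b - a) + u) : ℝ)) a
      (by positivity) h1 h2 (fun u hu => by show (w n u : ℝ) * _ = 0; rw [w_not_mem_box hu]; simp)
  simp only at key
  have lhs_eq : ∀ y : ℤ × ℤ, (w n (a - y) : ℝ) * (w n (b - y) : ℝ)
      = (w n (a - y) : ℝ) * (w n ((b - a) + (a - y)) : ℝ) := by
    intro y; congr 2; cases a; cases b; cases y; simp [Prod.ext_iff]; try omega
  calc ∑ y ∈ box M, (w n (a - y) : ℝ) * (w n (b - y) : ℝ)
      = ∑ y ∈ box M, (w n (a - y) : ℝ) * (w n ((b - a) + (a - y)) : ℝ) :=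
        Finset.sum_congr rfl fun y _ => lhs_eq y
    _ = ∑ u ∈ box (n : ℤ), (w n u : ℝ) * (w n ((b - a) + u) : ℝ) := key
    _ = ∑ u ∈ box (n : ℤ), (w n u : ℝ) * (w n ((a - b) - u) : ℝ) := by
        apply Finset.sum_congr rfl
        intro u _
        congr 2
        rw [← w_neg]
        congr 1
        cases a; cases b; cases u; simp [Prod.ext_iff]; try omega
    _ = (w (2 * n) (a - b) : ℝ) := chapman_box n (a - b) le_rfl

lemma even_le (n : ℕ) (x : ℤ × ℤ) : (w (2 * n) x : ℝ) ≤ (w (2 * n) 0 : ℝ) := by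
  set M : ℤ := (n : ℤ) + |x.1| + |x.2| with hM
  have hx1 : (0:ℤ) ≤ |x.1| := abs_nonneg _
  have hx2 : (0:ℤ) ≤ |x.2| := abs_nonneg _
  have c01 : (n : ℤ) + |(0 : ℤ × ℤ).1| ≤ M := by simp [hM]; omega
  have c02 : (n : ℤ) + |(0 : ℤ × ℤ).2| ≤ M := by simp [hM]; omega
  have cx1 : (n : ℤ) + |x.1| ≤ M := by omega
  have cx2 : (n : ℤ) + |x.2| ≤ M := by omega
  have hAA : ∑ y ∈ box M, (w n (0 - y) : ℝ) * (w n (0 - y) : ℝ) = (w (2 * n) 0 : ℝ) := by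
    rw [sum_prod n 0 0 c01 c02, sub_self]
  have hAB : ∑ y ∈ box M, (w n (0 - y) : ℝ) * (w n (x - y) : ℝ) = (w (2 * n) x : ℝ) := by
    rw [sum_prod n 0 x c01 c02, zero_sub, w_neg]
  have hBA : ∑ y ∈ box M, (w n (x - y) : ℝ) * (w n (0 - y) : ℝ) = (w (2 * n) x : ℝ) := by
    rw [sum_prod n x 0 cx1 cx2, sub_zero]
  have hBB : ∑ y ∈ box M, (w n (x - y) : ℝ) * (w n (x - y) : ℝ) = (w (2 * n) 0 : ℝ) := by
    rw [sum_prod n x x cx1 cx2, sub_self]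
  have hnn : (0:ℝ) ≤ ∑ y ∈ box M, ((w n (0 - y) : ℝ) - (w n (x - y) : ℝ))^2 :=
    Finset.sum_nonneg fun y _ => sq_nonneg _
  have expand : ∑ y ∈ box M, ((w n (0 - y) : ℝ) - (w n (x - y) : ℝ))^2
      = ∑ y ∈ box M, ((w n (0 - y) : ℝ) * (w n (0 - y) : ℝ)
        - (w n (0 - y) : ℝ) * (w n (x - y) : ℝ)
        - (w n (x - y) : ℝ) * (w n (0 - y) : ℝ)
        + (w n (x - y) : ℝ) * (w n (x - y) : ℝ)) :=
    Finset.sum_congr rfl fun y _ => by ring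
  rw [expand] at hnn
  simp only [Finset.sum_add_distrib, Finset.sum_sub_distrib] at hnn
  rw [hAA, hAB, hBA, hBB] at hnn
  linarith

lemma keyE (n : ℕ) (x e : ℤ × ℤ) (he1 : |e.1| ≤ 1) (he2 : |e.2| ≤ 1) :
    (w (2 * n) (x - e) : ℝ) + (w (2 * n) (x + e) : ℝ)
      ≤ 2 * (w (2 * n) 0 : ℝ) - 2 * (w (2 * n) x : ℝ) + 2 * (w (2 * n) e : ℝ) := by
  set M : ℤ := (n : ℤ) + |x.1| + |x.2| + 1 with hM
  have hx1 : (0:ℤ) ≤ |x.1| := abs_nonneg _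
  have hx2 : (0:ℤ) ≤ |x.2| := abs_nonneg _
  have hxe1 : |(x - e).1| ≤ |x.1| + 1 := by
    calc |(x - e).1| = |x.1 - e.1| := by simp
      _ ≤ |x.1| + |e.1| := abs_sub _ _
      _ ≤ |x.1| + 1 := by omega
  have hxe2 : |(x - e).2| ≤ |x.2| + 1 := by
    calc |(x - e).2| = |x.2 - e.2| := by simp
      _ ≤ |x.2| + |e.2| := abs_sub _ _
      _ ≤ |x.2| + 1 := by omega
  have c01 : (n : ℤ) + |(0 : ℤ × ℤ).1| ≤ M := by simp [hM]; omega
  have c02 : (n : ℤ) + |(0 : ℤ × ℤ).2| ≤ M := by simp [hM]; omega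
  have cx1 : (n : ℤ) + |x.1| ≤ M := by omega
  have cx2 : (n : ℤ) + |x.2| ≤ M := by omega
  have ce1 : (n : ℤ) + |(-e).1| ≤ M := by simp [hM]; omega
  have ce2 : (n : ℤ) + |(-e).2| ≤ M := by simp [hM]; omega
  have cd1 : (n : ℤ) + |(x - e).1| ≤ M := by omega
  have cd2 : (n : ℤ) + |(x - e).2| ≤ M := by omega
  -- notation: A = w n (0 - y), B = w n (x - y), C = w n (-e - y), D = w n ((x-e) - y)
  have hAA : ∑ y ∈ box M, (w n (0 - y) : ℝ) * (w n (0 - y) : ℝ) = (w (2 * n) 0 : ℝ) := by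
    rw [sum_prod n 0 0 c01 c02, sub_self]
  have hBB : ∑ y ∈ box M, (w n (x - y) : ℝ) * (w n (x - y) : ℝ) = (w (2 * n) 0 : ℝ) := by
    rw [sum_prod n x x cx1 cx2, sub_self]
  have hCC : ∑ y ∈ box M, (w n (-e - y) : ℝ) * (w n (-e - y) : ℝ) = (w (2 * n) 0 : ℝ) := by
    rw [sum_prod n (-e) (-e) ce1 ce2, sub_self]
  have hDD : ∑ y ∈ box M, (w n ((x - e) - y) : ℝ) * (w n ((x - e) - y) : ℝ)
      = (w (2 * n) 0 : ℝ) := by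
    rw [sum_prod n (x - e) (x - e) cd1 cd2, sub_self]
  have hAB : ∑ y ∈ box M, (w n (0 - y) : ℝ) * (w n (x - y) : ℝ) = (w (2 * n) x : ℝ) := by
    rw [sum_prod n 0 x c01 c02, zero_sub, w_neg]
  have hAC : ∑ y ∈ box M, (w n (0 - y) : ℝ) * (w n (-e - y) : ℝ) = (w (2 * n) e : ℝ) := by
    rw [sum_prod n 0 (-e) c01 c02, zero_sub, neg_neg]
  have hAD : ∑ y ∈ box M, (w n (0 - y) : ℝ) * (w n ((x - e) - y) : ℝ)
      = (w (2 * n) (x - e) : ℝ) := by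
    rw [sum_prod n 0 (x - e) c01 c02, zero_sub, w_neg]
  have hBC : ∑ y ∈ box M, (w n (x - y) : ℝ) * (w n (-e - y) : ℝ)
      = (w (2 * n) (x + e) : ℝ) := by
    rw [sum_prod n x (-e) cx1 cx2, sub_neg_eq_add]
  have hBD : ∑ y ∈ box M, (w n (x - y) : ℝ) * (w n ((x - e) - y) : ℝ)
      = (w (2 * n) e : ℝ) := by
    rw [sum_prod n x (x - e) cx1 cx2, sub_sub_cancel]
  have hCD : ∑ y ∈ box M, (w n (-e - y) : ℝ) * (w n ((x - e) - y) : ℝ)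
      = (w (2 * n) x : ℝ) := by
    rw [sum_prod n (-e) (x - e) ce1 ce2]
    have : -e - (x - e) = -x := by cases x; cases e; simp [Prod.ext_iff]; try omega
    rw [this, w_neg]
  have hnn : (0:ℝ) ≤ ∑ y ∈ box M, ((w n (0 - y) : ℝ) - (w n (x - y) : ℝ)
      + (w n (-e - y) : ℝ) - (w n ((x - e) - y) : ℝ))^2 :=
    Finset.sum_nonneg fun y _ => sq_nonneg _
  have expand : ∑ y ∈ box M, ((w n (0 - y) : ℝ) - (w n (x - y) : ℝ)
      + (w n (-e - y) : ℝ) - (w n ((x - e) - y) : ℝ))^2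
      = ∑ y ∈ box M, ((w n (0 - y) : ℝ) * (w n (0 - y) : ℝ)
        + (w n (x - y) : ℝ) * (w n (x - y) : ℝ)
        + (w n (-e - y) : ℝ) * (w n (-e - y) : ℝ)
        + (w n ((x - e) - y) : ℝ) * (w n ((x - e) - y) : ℝ)
        - 2 * ((w n (0 - y) : ℝ) * (w n (x - y) : ℝ))
        + 2 * ((w n (0 - y) : ℝ) * (w n (-e - y) : ℝ))
        - 2 * ((w n (0 - y) : ℝ) * (w n ((x - e) - y) : ℝ))
        - 2 * ((w n (x - y) : ℝ) * (w n (-e - y) : ℝ))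
        + 2 * ((w n (x - y) : ℝ) * (w n ((x - e) - y) : ℝ))
        - 2 * ((w n (-e - y) : ℝ) * (w n ((x - e) - y) : ℝ))) :=
    Finset.sum_congr rfl fun y _ => by ring
  rw [expand] at hnn
  simp only [Finset.sum_add_distrib, Finset.sum_sub_distrib, ← Finset.mul_sum] at hnn
  rw [hAA, hBB, hCC, hDD, hAB, hAC, hAD, hBC, hBD, hCD] at hnn
  linarith

lemma odd_ge (n : ℕ) (x : ℤ × ℤ) :
    -4 * ((w (2 * n) 0 : ℝ) - (w (2 * n) x : ℝ))
      ≤ (w (2 * n + 1) 0 : ℝ) - (w (2 * n + 1) x : ℝ) := by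
  have h1 := keyE n x (1, 0) (by norm_num) (by norm_num)
  have h2 := keyE n x (0, 1) (by norm_num) (by norm_num)
  have e1 : x + (1, 0) = x - (-1, 0) := by cases x; simp [Prod.ext_iff]; try omega
  have e2 : x + (0, 1) = x - (0, -1) := by cases x; simp [Prod.ext_iff]; try omega
  rw [e1] at h1
  rw [e2] at h2
  have hw0 : (w (2 * n + 1) 0 : ℝ)
      = (w (2 * n) (1, 0) : ℝ) + (w (2 * n) (1, 0) : ℝ)
        + (w (2 * n) (0, 1) : ℝ) + (w (2 * n) (0, 1) : ℝ) := by
    have a1 : (0 : ℤ × ℤ) - (1, 0) = -(1, 0) := by simp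
    have a2 : (0 : ℤ × ℤ) - (-1, 0) = (1, 0) := by simp [Prod.ext_iff]
    have a3 : (0 : ℤ × ℤ) - (0, 1) = -(0, 1) := by simp
    have a4 : (0 : ℤ × ℤ) - (0, -1) = (0, 1) := by simp [Prod.ext_iff]
    rw [w_succ, a1, a2, a3, a4, w_neg, w_neg]
    push_cast
    ring
  have hwx : (w (2 * n + 1) x : ℝ)
      = (w (2 * n) (x - (1, 0)) : ℝ) + (w (2 * n) (x - (-1, 0)) : ℝ)
        + (w (2 * n) (x - (0, 1)) : ℝ) + (w (2 * n) (x - (0, -1)) : ℝ) := by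
    rw [w_succ]; push_cast; ring
  linarith



def WS (n : ℕ) (x : ℤ × ℤ) : Set (Fin (n + 1) → ℤ × ℤ) :=
  {v | v 0 = (0, 0) ∧ v (Fin.last n) = x ∧
    ∀ i : Fin n, gnorm (v i.succ - v i.castSucc) = 1}

lemma W_eq_ncard (n : ℕ) (x : ℤ × ℤ) : W n x = (WS n x).ncard := rfl

lemma gnorm_one_iff (d : ℤ × ℤ) :
    gnorm d = 1 ↔ d = (1, 0) ∨ d = (-1, 0) ∨ d = (0, 1) ∨ d = (0, -1) := by
  obtain ⟨d1, d2⟩ := d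
  simp only [gnorm, Prod.mk.injEq]
  omega

lemma WS_bounded {n : ℕ} {x : ℤ × ℤ} {v : Fin (n + 1) → ℤ × ℤ} (hv : v ∈ WS n x)
    (i : Fin (n + 1)) : gnorm (v i) ≤ n := by
  obtain ⟨h0, hl, hs⟩ := hv
  suffices h : ∀ m (hm : m < n + 1), gnorm (v ⟨m, hm⟩) ≤ m by
    have := h i.1 i.2
    simp only [Fin.eta] at this
    exact this.trans (by omega)
  intro m
  induction m with
  | zero => intro hm; simpa [gnorm] using congrArg gnorm h0
  | succ m ih =>
    intro hm
    have hmn : m < n := by omega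
    have hstep := hs ⟨m, hmn⟩
    have hsm : (⟨m, hmn⟩ : Fin n).succ = ⟨m + 1, hm⟩ := rfl
    have hcm : (⟨m, hmn⟩ : Fin n).castSucc = ⟨m, by omega⟩ := rfl
    rw [hsm, hcm] at hstep
    have h1 := ih (by omega)
    simp only [gnorm, Prod.fst_sub, Prod.snd_sub] at hstep h1 ⊢
    omega

lemma WS_finite (n : ℕ) (x : ℤ × ℤ) : (WS n x).Finite := by
  have hsub : WS n x ⊆ Set.pi Set.univ
      (fun _ : Fin (n + 1) => {z : ℤ × ℤ | gnorm z ≤ n}) := by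
    intro v hv i _
    exact WS_bounded hv i
  apply Set.Finite.subset _ hsub
  apply Set.Finite.pi
  intro _
  have : {z : ℤ × ℤ | gnorm z ≤ n} ⊆
      (Set.Icc (-(n:ℤ)) (n:ℤ)) ×ˢ (Set.Icc (-(n:ℤ)) (n:ℤ)) := by
    rintro ⟨z1, z2⟩ hz
    simp only [gnorm, Set.mem_setOf_eq] at hz
    constructor <;> simp only [Set.mem_Icc] <;> omega
  exact Set.Finite.subset ((Set.finite_Icc _ _).prod (Set.finite_Icc _ _)) this

def rmap (n : ℕ) : (Fin (n + 2) → ℤ × ℤ) → (Fin (n + 1) → ℤ × ℤ) :=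
  fun v => v ∘ Fin.castSucc

def slice (n : ℕ) (x e : ℤ × ℤ) : Set (Fin (n + 2) → ℤ × ℤ) :=
  {v | v ∈ WS (n + 1) x ∧ v ((Fin.last n).castSucc) = x - e}

lemma rmap_injOn (n : ℕ) (x e : ℤ × ℤ) : Set.InjOn (rmap n) (slice n x e) := by
  intro v hv v' hv' h
  funext j
  rcases Fin.eq_castSucc_or_eq_last j with ⟨i, rfl⟩ | rfl
  · exact congrFun h i
  · rw [hv.1.2.1, hv'.1.2.1]

lemma rmap_image (n : ℕ) (x e : ℤ × ℤ) (he : gnorm e = 1) :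
    rmap n '' slice n x e = WS n (x - e) := by
  ext u
  constructor
  · rintro ⟨v, ⟨⟨h0, hl, hs⟩, hp⟩, rfl⟩
    refine ⟨?_, ?_, ?_⟩
    · show v (Fin.castSucc 0) = (0, 0)
      rwa [Fin.castSucc_zero]
    · exact hp
    · intro j
      have hstep := hs j.castSucc
      show gnorm (v (Fin.castSucc j.succ) - v (Fin.castSucc j.castSucc)) = 1
      rwa [Fin.succ_castSucc] at hstep
  · intro hu
    obtain ⟨h0, hl, hs⟩ := hu
    refine ⟨Fin.snoc u x, ⟨⟨?_, ?_, ?_⟩, ?_⟩, ?_⟩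
    · rw [← Fin.castSucc_zero', Fin.snoc_castSucc, h0]
    · rw [Fin.snoc_last]
    · intro i
      rcases Fin.eq_castSucc_or_eq_last i with ⟨j, rfl⟩ | rfl
      · have h1 : (Fin.castSucc j).succ = Fin.castSucc j.succ := Fin.succ_castSucc _
        rw [h1, Fin.snoc_castSucc, Fin.snoc_castSucc]
        exact hs j
      · rw [Fin.succ_last, Fin.snoc_last, Fin.snoc_castSucc, hl, sub_sub_cancel]
        exact he
    · rw [Fin.snoc_castSucc, hl]
    · funext i
      simp only [rmap, Function.comp_apply, Fin.snoc_castSucc]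

lemma slice_ncard (n : ℕ) (x e : ℤ × ℤ) (he : gnorm e = 1) :
    (slice n x e).ncard = W n (x - e) := by
  rw [W_eq_ncard, ← rmap_image n x e he, Set.ncard_image_of_injOn (rmap_injOn n x e)]

lemma cover (n : ℕ) (x : ℤ × ℤ) :
    WS (n + 1) x = slice n x (1, 0) ∪ slice n x (-1, 0) ∪ slice n x (0, 1)
      ∪ slice n x (0, -1) := by
  ext v
  simp only [Set.mem_union, slice, Set.mem_setOf_eq]
  constructor
  · intro hv
    have hstep := hv.2.2 (Fin.last n)
    rw [Fin.succ_last, hv.2.1] at hstep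
    rcases (gnorm_one_iff _).mp hstep with h | h | h | h
    · exact Or.inl (Or.inl (Or.inl ⟨hv, by rw [← h]; abel⟩))
    · exact Or.inl (Or.inl (Or.inr ⟨hv, by rw [← h]; abel⟩))
    · exact Or.inl (Or.inr ⟨hv, by rw [← h]; abel⟩)
    · exact Or.inr ⟨hv, by rw [← h]; abel⟩
  · rintro (((⟨hv, _⟩ | ⟨hv, _⟩) | ⟨hv, _⟩) | ⟨hv, _⟩) <;> exact hv

lemma slice_disjoint (n : ℕ) (x : ℤ × ℤ) {e e' : ℤ × ℤ} (h : e ≠ e') :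
    Disjoint (slice n x e) (slice n x e') := by
  rw [Set.disjoint_left]
  rintro v ⟨_, hp⟩ ⟨_, hp'⟩
  exact h (sub_right_injective (hp.symm.trans hp'))

lemma slice_finite (n : ℕ) (x e : ℤ × ℤ) : (slice n x e).Finite :=
  (WS_finite (n + 1) x).subset fun _ hv => hv.1

lemma W_rec (n : ℕ) (x : ℤ × ℤ) :
    W (n + 1) x = W n (x - (1, 0)) + W n (x - (-1, 0)) + W n (x - (0, 1))
      + W n (x - (0, -1)) := by
  have d12 : Disjoint (slice n x (1, 0)) (slice n x (-1, 0)) :=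
    slice_disjoint n x (by norm_num [Prod.ext_iff])
  have d13 : Disjoint (slice n x (1, 0)) (slice n x (0, 1)) :=
    slice_disjoint n x (by norm_num [Prod.ext_iff])
  have d23 : Disjoint (slice n x (-1, 0)) (slice n x (0, 1)) :=
    slice_disjoint n x (by norm_num [Prod.ext_iff])
  have d14 : Disjoint (slice n x (1, 0)) (slice n x (0, -1)) :=
    slice_disjoint n x (by norm_num [Prod.ext_iff])
  have d24 : Disjoint (slice n x (-1, 0)) (slice n x (0, -1)) :=
    slice_disjoint n x (by norm_num [Prod.ext_iff])
  have d34 : Disjoint (slice n x (0, 1)) (slice n x (0, -1)) :=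
    slice_disjoint n x (by norm_num [Prod.ext_iff])
  have f1 := slice_finite n x (1, 0)
  have f2 := slice_finite n x (-1, 0)
  have f3 := slice_finite n x (0, 1)
  have f4 := slice_finite n x (0, -1)
  rw [W_eq_ncard, cover n x]
  rw [Set.ncard_union_eq (by
      simp only [Set.disjoint_union_left]; exact ⟨⟨d14, d24⟩, d34⟩)
    ((f1.union f2).union f3) f4]
  rw [Set.ncard_union_eq (by simp only [Set.disjoint_union_left]; exact ⟨d13, d23⟩)
    (f1.union f2) f3]
  rw [Set.ncard_union_eq d12 f1 f2]
  rw [slice_ncard n x (1, 0) (by simp [gnorm]), slice_ncard n x (-1, 0) (by simp [gnorm]),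
    slice_ncard n x (0, 1) (by simp [gnorm]), slice_ncard n x (0, -1) (by simp [gnorm])]

theorem W_eq_w (n : ℕ) (x : ℤ × ℤ) : W n x = w n x := by
  induction n generalizing x with
  | zero =>
    rw [w_zero, W_eq_ncard]
    rcases eq_or_ne x 0 with rfl | hx
    · rw [if_pos rfl]
      have hset : WS 0 0 = {(fun _ => (0, 0) : Fin 1 → ℤ × ℤ)} := by
        ext v
        constructor
        · rintro ⟨h0, _, _⟩
          funext i
          have hi : i = 0 := Fin.ext (by omega)
          rw [hi]
          exact h0
        · rintro rfl
          exact ⟨rfl, rfl, fun i => i.elim0⟩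
      rw [hset, Set.ncard_singleton]
    · rw [if_neg hx]
      have hset : WS 0 x = ∅ := by
        ext v
        simp only [Set.mem_empty_iff_false, iff_false]
        rintro ⟨h0, hl, _⟩
        exact hx (by rw [← hl]; exact h0.symm ▸ rfl)
      rw [hset, Set.ncard_empty]
  | succ n ih =>
    rw [W_rec, ih, ih, ih, ih, w_succ]

end SRW

open SRW in
/-- Proposition 3.3, eq. (3.8): `G^{o,o} − G^{o,x} ≥ 3/4` for every `|x| ≥ 1`. -/
theorem stmt4 (κ : ℝ) (hκ : 0 < κ) (x : ℤ × ℤ) (hx : 1 ≤ gnorm x) :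
    (3 : ℝ) / 4 ≤ G κ (0, 0) - G κ x := by
  classical
  have hx0 : x ≠ 0 := by
    rintro rfl
    simp [gnorm] at hx
  set lam : ℝ := 1 / (4 + κ) with hlam
  have h4κ : (0:ℝ) < 4 + κ := by linarith
  have hlam_pos : 0 < lam := by positivity
  have hlam_lt : lam < 1 / 4 := by
    rw [hlam, div_lt_div_iff₀ h4κ (by norm_num)]
    linarith
  have hsum : ∀ z : ℤ × ℤ, Summable (fun n : ℕ => lam ^ n * (w n z : ℝ)) := by
    intro z
    apply Summable.of_nonneg_of_le (fun n => by positivity)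
      (f := fun n : ℕ => (4 * lam) ^ n)
    · intro n
      have hw : (w n z : ℝ) ≤ 4 ^ n := by exact_mod_cast w_le n z
      calc lam ^ n * (w n z : ℝ) ≤ lam ^ n * 4 ^ n :=
            mul_le_mul_of_nonneg_left hw (by positivity)
        _ = (4 * lam) ^ n := by rw [mul_pow]; ring
    · exact summable_geometric_of_lt_one (by positivity) (by linarith)
  have hG : ∀ z : ℤ × ℤ, G κ z = ∑' n : ℕ, lam ^ n * (w n z : ℝ) := by
    intro z
    unfold G
    simp only [W_eq_w, ← hlam]
  set f : ℕ → ℝ := fun n => lam ^ n * ((w n 0 : ℝ) - (w n x : ℝ)) with hf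
  have hfsum : Summable f :=
    ((hsum 0).sub (hsum x)).congr (fun n => by rw [hf]; ring)
  have hdiff : G κ (0, 0) - G κ x = ∑' n, f n := by
    rw [hG (0, 0), hG x, ← (hsum (0, 0)).tsum_sub (hsum x)]
    congr 1
    funext n
    rw [hf]
    have h00 : ((0, 0) : ℤ × ℤ) = 0 := rfl
    rw [h00]
    ring
  have he : Summable (fun k => f (2 * k)) :=
    hfsum.comp_injective (fun a b h => by omega)
  have ho : Summable (fun k => f (2 * k + 1)) :=
    hfsum.comp_injective (fun a b h => by omega)
  have hsplit : ∑' n, f n = ∑' k, (f (2 * k) + f (2 * k + 1)) := by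
    rw [he.tsum_add ho]
    exact (tsum_even_add_odd he ho).symm
  have hterm : ∀ k : ℕ, 0 ≤ f (2 * k) + f (2 * k + 1) := by
    intro k
    have hA := even_le k x
    have hB := odd_ge k x
    have hf2 : f (2 * k) = lam ^ (2 * k) * ((w (2 * k) 0 : ℝ) - (w (2 * k) x : ℝ)) := rfl
    have hf21 : f (2 * k + 1)
        = lam ^ (2 * k) * lam * (((w (2 * k + 1) 0 : ℝ)) - (w (2 * k + 1) x : ℝ)) := by
      simp only [hf]
      ring
    have hp : (0:ℝ) ≤ lam ^ (2 * k) := by positivity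
    rw [hf2, hf21]
    nlinarith [mul_le_mul_of_nonneg_left hB (le_of_lt hlam_pos),
      mul_le_mul_of_nonneg_right (le_of_lt hlam_lt)
        (sub_nonneg.mpr hA)]
  have hw0x : w 0 x = 0 := by rw [w_zero, if_neg hx0]
  have hw00 : w 0 (0 : ℤ × ℤ) = 1 := by rw [w_zero, if_pos rfl]
  have hw10 : w 1 (0 : ℤ × ℤ) = 0 := by
    have h : (0 : ℤ × ℤ) = ((0 : ℤ), (0 : ℤ)) := rfl
    rw [h, w_succ, w_zero, w_zero, w_zero, w_zero]
    simp only [Prod.mk_sub_mk, Prod.mk_eq_zero]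
    norm_num
  have hw1x : w 1 x ≤ 1 := by
    obtain ⟨x1, x2⟩ := x
    rw [w_succ, w_zero, w_zero, w_zero, w_zero]
    simp only [Prod.mk_sub_mk, Prod.mk_eq_zero]
    split_ifs <;> omega
  have hg0 : 1 - lam ≤ f 0 + f 1 := by
    have hf0 : f 0 = 1 := by rw [hf]; simp [hw00, hw0x]
    have hf1 : f 1 = lam * (0 - (w 1 x : ℝ)) := by rw [hf]; simp [hw10]
    have : (w 1 x : ℝ) ≤ 1 := by exact_mod_cast hw1x
    rw [hf0, hf1]
    nlinarith
  have hfin : f 0 + f 1 ≤ ∑' k, (f (2 * k) + f (2 * k + 1)) := by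
    have h := (he.add ho).le_tsum 0 (fun j _ => hterm j)
    simpa using h
  calc (3:ℝ)/4 ≤ 1 - lam := by linarith
    _ ≤ f 0 + f 1 := hg0
    _ ≤ ∑' k, (f (2 * k) + f (2 * k + 1)) := hfin
    _ = ∑' n, f n := hsplit.symm
    _ = G κ (0, 0) - G κ x := hdiff.symm
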